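/- Let $f_n(p) = c_n (1-p)^n e^{-1/p}$ for $p \in (0,1)$, where $c_n$ normalizes $f_n$ to a probability density. Set $a_n = 1/(4\sqrt{\max(1,n)})$. Then $\int_{a_n}^1 f_n(p)\,dp \geq 1/2$, and consequently $\int_0^1 p f_n(p)\,dp \geq 1/(8\sqrt{\max(1,n)})$. -/

import Mathlib

open MeasureTheory
open Set

lemma g_meas (n : ℕ) : Measurable (fun p : ℝ => (1 - p) ^ n * Real.exp (-(1 / p))) := by
  fun_prop

lemma g_int (n : ℕ) : IntegrableOn (fun p : ℝ => (1 - p) ^ n * Real.exp (-(1 / p))) (Icc 0 1) := by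
  apply Measure.integrableOn_of_bounded (M := 1) measure_Icc_lt_top.ne
    (g_meas n).aestronglyMeasurable
  filter_upwards [ae_restrict_mem measurableSet_Icc] with p hp
  have h1 : (0:ℝ) ≤ 1 - p := by linarith [hp.2]
  have h2 : (1:ℝ) - p ≤ 1 := by linarith [hp.1]
  have h3 : Real.exp (-(1/p)) ≤ 1 := by
    rw [Real.exp_le_one_iff, neg_nonpos]
    exact one_div_nonneg.2 hp.1
  rw [Real.norm_eq_abs, abs_mul, abs_of_nonneg (pow_nonneg h1 n), Real.abs_exp]
  calc (1-p)^n * Real.exp (-(1/p)) ≤ 1 * 1 := by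
        apply mul_le_mul (pow_le_one₀ h1 h2) h3 (Real.exp_nonneg _) one_pos.le
    _ = 1 := by ring

lemma pg_int (n : ℕ) : IntegrableOn (fun p : ℝ => p * ((1 - p) ^ n * Real.exp (-(1 / p)))) (Icc 0 1) := by
  apply Measure.integrableOn_of_bounded (M := 1) measure_Icc_lt_top.ne
    (measurable_id.mul (g_meas n)).aestronglyMeasurable
  filter_upwards [ae_restrict_mem measurableSet_Icc] with p hp
  have h1 : (0:ℝ) ≤ 1 - p := by linarith [hp.2]
  have h2 : (1:ℝ) - p ≤ 1 := by linarith [hp.1]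
  have h3 : Real.exp (-(1/p)) ≤ 1 := by
    rw [Real.exp_le_one_iff, neg_nonpos]
    exact one_div_nonneg.2 hp.1
  rw [Real.norm_eq_abs, Pi.mul_apply, abs_mul, abs_mul, show |id p| = p from abs_of_nonneg hp.1,
    abs_of_nonneg (pow_nonneg h1 n), Real.abs_exp]
  calc p * ((1-p)^n * Real.exp (-(1/p))) ≤ 1 * (1 * 1) := by
        apply mul_le_mul hp.2 (mul_le_mul (pow_le_one₀ h1 h2) h3 (Real.exp_nonneg _) one_pos.le)
          (by positivity) one_pos.le
    _ = 1 := by ring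

lemma g_mono (n : ℕ) {p q : ℝ} (hp : 0 < p) (hpq : p ≤ q) (hq2 : q ≤ 1/2)
    (hnpq : (n:ℝ) * p * q ≤ 1 - q) :
    (1 - p) ^ n * Real.exp (-(1 / p)) ≤ (1 - q) ^ n * Real.exp (-(1 / q)) := by
  have hq : 0 < q := lt_of_lt_of_le hp hpq
  have h1q : 0 < 1 - q := by linarith
  set d : ℝ := (q - p) / (1 - q) with hd
  have hd0 : 0 ≤ d := div_nonneg (sub_nonneg.2 hpq) h1q.le
  have key1 : (1 - p) = (1 - q) * (1 + d) := by
    rw [hd]; field_simp; ring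
  have key2 : (1 + d) ^ n ≤ Real.exp ((n:ℝ) * d) := by
    calc (1 + d) ^ n ≤ (Real.exp d) ^ n := by
          apply pow_le_pow_left₀ (by linarith) (by linarith [Real.add_one_le_exp d])
      _ = Real.exp ((n:ℝ) * d) := by rw [← Real.exp_nat_mul]
  have key3 : (n:ℝ) * d ≤ 1/p - 1/q := by
    have h1 : (n:ℝ) * (q - p) / (1 - q) ≤ (q - p) / (p * q) := by
      rw [div_le_div_iff₀ h1q (mul_pos hp hq)]
      nlinarith [sub_nonneg.2 hpq]
    have h2 : (q - p) / (p * q) = 1/p - 1/q := by field_simp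
    rw [hd]; rw [h2] at h1; linarith [h1, (by ring : (n:ℝ) * (q-p)/(1-q) = (n:ℝ) * ((q-p)/(1-q)))]
  calc (1 - p) ^ n * Real.exp (-(1/p))
      = (1 - q) ^ n * ((1 + d) ^ n * Real.exp (-(1/p))) := by rw [key1, mul_pow]; ring
    _ ≤ (1 - q) ^ n * (Real.exp ((n:ℝ)*d) * Real.exp (-(1/p))) := by
        apply mul_le_mul_of_nonneg_left (mul_le_mul_of_nonneg_right key2 (Real.exp_nonneg _))
          (pow_nonneg h1q.le n)
    _ = (1 - q) ^ n * Real.exp ((n:ℝ)*d - 1/p) := by rw [← Real.exp_add]; ring_nf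
    _ ≤ (1 - q) ^ n * Real.exp (-(1/q)) := by
        apply mul_le_mul_of_nonneg_left (Real.exp_le_exp.2 (by linarith)) (pow_nonneg h1q.le n)



/-- Let `f_n(p) = c_n (1-p)^n e^{-1/p}` on `(0,1)`, normalized to a probability density,
and let `a_n = 1/(4 √(max 1 n))`. Then `∫_{a_n}^1 f_n ≥ 1/2`, and consequently
`∫_0^1 p f_n(p) dp ≥ 1/(8 √(max 1 n))`. -/
theorem exp_prior_mass_and_mean_bound (n : ℕ) :
    (let c : ℝ := (∫ p in Set.Ioo (0 : ℝ) 1, (1 - p) ^ n * Real.exp (-(1 / p)))⁻¹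
     let a : ℝ := 1 / (4 * Real.sqrt (max 1 (n : ℝ)))
     c * (∫ p in Set.Ioo a 1, (1 - p) ^ n * Real.exp (-(1 / p))) ≥ 1 / 2 ∧
     c * (∫ p in Set.Ioo (0 : ℝ) 1, p * ((1 - p) ^ n * Real.exp (-(1 / p))))
        ≥ 1 / (8 * Real.sqrt (max 1 (n : ℝ)))) := by
  intro c a
  have hm0 : (0:ℝ) ≤ max 1 (n:ℝ) := le_trans zero_le_one (le_max_left _ _)
  set s := Real.sqrt (max 1 (n:ℝ)) with hs
  have hs1 : 1 ≤ s := Real.one_le_sqrt.2 (le_max_left _ _)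
  have hs0 : 0 < s := lt_of_lt_of_le one_pos hs1
  have hn : (n:ℝ) ≤ s^2 := by rw [hs, Real.sq_sqrt hm0]; exact le_max_right _ _
  set G : ℝ → ℝ := fun p => (1 - p) ^ n * Real.exp (-(1 / p)) with hG
  have hc : c = (∫ p in Set.Ioo (0:ℝ) 1, G p)⁻¹ := rfl
  have ha : a = 1/(4*s) := rfl
  have ha0 : 0 < a := by rw [ha]; positivity
  have has : a * s = 1/4 := by rw [ha]; field_simp
  have ha14 : a ≤ 1/4 := by
    rw [ha]; exact one_div_le_one_div_of_le (by norm_num) (by linarith)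
  have h2a : 2*a ≤ 1/2 := by linarith
  have hGnn : ∀ p : ℝ, p ≤ 1 → 0 ≤ G p := fun p hp =>
    mul_nonneg (pow_nonneg (by linarith) n) (Real.exp_nonneg _)
  have hGpos : ∀ p ∈ Set.Ioo (0:ℝ) 1, 0 < G p := fun p hp =>
    mul_pos (pow_pos (by linarith [hp.2]) n) (Real.exp_pos _)
  have hint : ∀ x y : ℝ, 0 ≤ x → x ≤ y → y ≤ 1 → IntervalIntegrable G volume x y := by
    intro x y hx hxy hy
    apply IntegrableOn.intervalIntegrable
    apply (g_int n).mono_set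
    rw [Set.uIcc_of_le hxy]
    exact Set.Icc_subset_Icc hx hy
  have hIoo : ∀ (f : ℝ → ℝ) (x y : ℝ), x ≤ y →
      (∫ p in Set.Ioo x y, f p) = ∫ p in x..y, f p := by
    intro f x y h
    rw [intervalIntegral.integral_of_le h, integral_Ioc_eq_integral_Ioo]
  have hI0 : 0 < ∫ p in Set.Ioo (0:ℝ) 1, G p := by
    rw [hIoo G 0 1 zero_le_one]
    exact intervalIntegral.intervalIntegral_pos_of_pos_on
      (hint 0 1 le_rfl zero_le_one le_rfl) hGpos one_pos
  -- pointwise monotonicity on (0, a)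
  have key : ∀ x ∈ Set.Ioo (0:ℝ) a, G x ≤ G (x + a) := by
    intro x hx
    have hxa : x + a ≤ 2*a := by linarith [hx.2]
    apply g_mono n hx.1 (by linarith [ha0]) (by linarith)
    have h1 : (n:ℝ) * x ≤ s^2 * a :=
      mul_le_mul hn hx.2.le hx.1.le (by positivity)
    have h2 : (n:ℝ) * x * (x + a) ≤ (s^2 * a) * (2*a) :=
      mul_le_mul h1 hxa (by linarith [hx.1, ha0]) (by positivity)
    have h3 : (s^2 * a) * (2*a) = 2 * (a*s)^2 := by ring
    rw [h3, has] at h2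
    norm_num at h2
    linarith
  -- integral comparison ∫₀ᵃ ≤ ∫ₐ²ᵃ
  have int2 : IntervalIntegrable (fun x => G (x + a)) volume 0 a := by
    have h := (hint a (2*a) ha0.le (by linarith) (by linarith)).comp_add_right a
    rw [sub_self, show 2*a - a = a by ring] at h
    exact h
  have comp1 : (∫ p in (0:ℝ)..a, G p) ≤ ∫ p in a..(2*a), G p := by
    calc (∫ p in (0:ℝ)..a, G p) = ∫ p in Set.Ioo (0:ℝ) a, G p := (hIoo G 0 a ha0.le).symm
      _ ≤ ∫ p in Set.Ioo (0:ℝ) a, G (p + a) := by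
          apply setIntegral_mono_on
            ((g_int n).mono_set (le_trans Set.Ioo_subset_Icc_self
              (Set.Icc_subset_Icc le_rfl (by linarith))))
            ((intervalIntegrable_iff_integrableOn_Ioo_of_le ha0.le).1 int2)
            measurableSet_Ioo
          exact key
      _ = ∫ p in (0:ℝ)..a, G (p + a) := hIoo _ 0 a ha0.le
      _ = ∫ p in (0+a)..(a+a), G p := intervalIntegral.integral_comp_add_right G a
      _ = ∫ p in a..(2*a), G p := by rw [zero_add, two_mul]
  have comp2 : (∫ p in a..(2*a), G p) ≤ ∫ p in a..1, G p := by
    have hsplit : (∫ p in a..1, G p) =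
        (∫ p in a..(2*a), G p) + ∫ p in (2*a)..1, G p :=
      (intervalIntegral.integral_add_adjacent_intervals
        (hint a (2*a) ha0.le (by linarith) (by linarith))
        (hint (2*a) 1 (by linarith) (by linarith) le_rfl)).symm
    have hnn : 0 ≤ ∫ p in (2*a)..1, G p :=
      intervalIntegral.integral_nonneg (by linarith) (fun u hu => hGnn u hu.2)
    linarith
  have hsplitI : (∫ p in Set.Ioo (0:ℝ) 1, G p) =
      (∫ p in (0:ℝ)..a, G p) + ∫ p in a..1, G p := by
    rw [hIoo G 0 1 zero_le_one]
    exact (intervalIntegral.integral_add_adjacent_intervals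
      (hint 0 a le_rfl ha0.le (by linarith))
      (hint a 1 ha0.le (by linarith) le_rfl)).symm
  have hX : (∫ p in Set.Ioo (0:ℝ) 1, G p) ≤ 2 * ∫ p in a..1, G p := by linarith
  have hXoo : (∫ p in Set.Ioo a 1, G p) = ∫ p in a..1, G p := hIoo G a 1 (by linarith)
  constructor
  · show c * (∫ p in Set.Ioo a 1, G p) ≥ 1/2
    rw [ge_iff_le, hc, hXoo, inv_mul_eq_div, le_div_iff₀ hI0]
    linarith
  · show c * (∫ p in Set.Ioo (0:ℝ) 1, p * G p) ≥ 1/(8*s)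
    have hsub1 : Set.Ioo a 1 ⊆ Set.Icc (0:ℝ) 1 :=
      le_trans Set.Ioo_subset_Icc_self (Set.Icc_subset_Icc ha0.le le_rfl)
    have hJint : IntegrableOn (fun p : ℝ => p * G p) (Set.Icc 0 1) := pg_int n
    have hJnn : 0 ≤ᵐ[volume.restrict (Set.Ioo (0:ℝ) 1)] fun p => p * G p := by
      filter_upwards [ae_restrict_mem measurableSet_Ioo] with p hp
      exact mul_nonneg hp.1.le (hGnn p hp.2.le)
    have step1 : (∫ p in Set.Ioo a 1, p * G p) ≤ ∫ p in Set.Ioo (0:ℝ) 1, p * G p :=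
      setIntegral_mono_set (hJint.mono_set Set.Ioo_subset_Icc_self) hJnn
        (HasSubset.Subset.eventuallyLE (Set.Ioo_subset_Ioo ha0.le le_rfl))
    have step2 : (∫ p in Set.Ioo a 1, a * G p) ≤ ∫ p in Set.Ioo a 1, p * G p := by
      apply setIntegral_mono_on (((g_int n).mono_set hsub1).const_mul a)
        (hJint.mono_set hsub1) measurableSet_Ioo
      intro x hx
      exact mul_le_mul_of_nonneg_right hx.1.le (hGnn x hx.2.le)
    have step3 : (∫ p in Set.Ioo a 1, a * G p) = a * ∫ p in Set.Ioo a 1, G p :=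
      integral_const_mul a G
    have h8 : (1:ℝ)/(8*s) = a/2 := by rw [ha]; ring
    rw [ge_iff_le, hc, h8, inv_mul_eq_div, le_div_iff₀ hI0]
    nlinarith [hI0, ha0, hX, hXoo, step1, step2, step3]
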